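/- Let ρ > 0, γ > 0, α > 0 and μ ≥ 0 be real numbers, let K ∈ ℕ, and let (F_k) and (Y_k) be real sequences such that for all k ≥ K: Y_{k+1} − Y_k = −( ρ (F_{k+1} + Y_k) + μ ) / (γ + ρ), and μ/α < F_{k+1} + Y_{k+1}. Assume moreover Σ_{k=K}^∞ |Y_{k+1} − Y_k|² < ∞. Then μ = 0 and lim_{k→∞} (F_{k+1} + Y_{k+1}) = 0. -/
import Mathlib


open Filter

/-- Frozen-dual case of the slack recursion. If for all `k ≥ K`
`Y_{k+1} − Y_k = −(ρ(F_{k+1} + Y_k) + μ)/(γ + ρ)` and `μ/α < F_{k+1} + Y_{k+1}`,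
with `Σ_{k≥K} |Y_{k+1} − Y_k|² < ∞`, then `μ = 0` and `F_{k+1} + Y_{k+1} → 0`. -/
theorem frozen_dual_slack_recursion_limit (ρ γ α μ : ℝ)
    (hρ : 0 < ρ) (hγ : 0 < γ) (hα : 0 < α) (hμ : 0 ≤ μ)
    (K : ℕ) (F Y : ℕ → ℝ)
    (hrec : ∀ k, K ≤ k → Y (k + 1) - Y k = -(ρ * (F (k + 1) + Y k) + μ) / (γ + ρ))
    (hlt : ∀ k, K ≤ k → μ / α < F (k + 1) + Y (k + 1))
    (hsum : Summable fun k : ℕ => |Y (K + k + 1) - Y (K + k)| ^ 2) :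
    μ = 0 ∧ Tendsto (fun k => F (k + 1) + Y (k + 1)) atTop (nhds 0) := by
  have hρ0 : ρ ≠ 0 := hρ.ne'
  have hγρ : γ + ρ ≠ 0 := by positivity
  set d : ℕ → ℝ := fun k => Y (k + 1) - Y k with hd_def
  -- d tends to 0
  have h1 : Tendsto (fun k : ℕ => |d (K + k)| ^ 2) atTop (nhds 0) := hsum.tendsto_atTop_zero
  have h2 : Tendsto (fun k : ℕ => |d (K + k)|) atTop (nhds 0) := by
    have := h1.sqrt
    simpa [Real.sqrt_sq_eq_abs, abs_abs] using this
  have h3 : Tendsto (fun k : ℕ => d (K + k)) atTop (nhds 0) := by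
    exact tendsto_zero_iff_abs_tendsto_zero _ |>.mpr h2
  have hd0 : Tendsto d atTop (nhds 0) := by
    rw [← tendsto_add_atTop_iff_nat K]
    simpa [add_comm] using h3
  -- eventual formula for the residual
  have hev : ∀ᶠ k in atTop, F (k + 1) + Y (k + 1) = (-γ * d k - μ) / ρ := by
    filter_upwards [eventually_ge_atTop K] with k hk
    have e := hrec k hk
    have e' : d k * (γ + ρ) = -(ρ * (F (k + 1) + Y k) + μ) := by
      field_simp [hd_def] at e ⊢
      linarith
    have : F (k + 1) + Y (k + 1) = d k + (F (k + 1) + Y k) := by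
      simp [hd_def]; ring
    rw [this]
    field_simp
    linarith
  have hg : Tendsto (fun k => F (k + 1) + Y (k + 1)) atTop (nhds ((-γ * 0 - μ) / ρ)) := by
    exact Tendsto.congr' (hev.mono fun k hk => hk.symm)
      (((hd0.const_mul (-γ)).sub_const μ).div_const ρ)
  have hlim : Tendsto (fun k => F (k + 1) + Y (k + 1)) atTop (nhds (-μ / ρ)) := by
    simpa using hg
  have hle : μ / α ≤ -μ / ρ :=
    ge_of_tendsto hlim ((eventually_ge_atTop K).mono fun k hk => (hlt k hk).le)
  have hμ0 : μ = 0 := by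
    rw [div_le_div_iff₀ hα hρ] at hle
    nlinarith
  refine ⟨hμ0, ?_⟩
  simpa [hμ0] using hlim
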